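/- Let K ⊂ (0,∞) be a compact set, let C₁, C₂ > 0, and let f : (0,∞) → ℝ be continuous with |f(x)| ≤ C₁ e^{C₂|log x|} for all x > 0. Then for every t > 0, with P_t f(x) = ∫₀^∞ f(w) p_GBM(t, w; x) dw and M := max{ |log(min K)|, |log(max K)| }, one has ∫_K |P_t f(x)| dx ≤ 2 C₁ e^{(C₂ + 2) M} e^{C₂(C₂+1) t / 2}. -/

import Mathlib

open MeasureTheory Set

/-- Heat kernel `p(t,x) = (2πt)^{-1/2} e^{-x²/(2t)}`. -/
noncomputable def heatK (t x : ℝ) : ℝ :=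
  (Real.sqrt (2 * Real.pi * t))⁻¹ * Real.exp (-x ^ 2 / (2 * t))

/-- Geometric Brownian motion transition kernel
`p_GBM(t,w;x) = x^{1/2} e^{-t/8} p(t, log w − log x) w^{-3/2}`. -/
noncomputable def pGBM (t w x : ℝ) : ℝ :=
  Real.sqrt x * Real.exp (-t / 8) * heatK t (Real.log w - Real.log x) * w ^ (-(3 : ℝ) / 2)

lemma rexp_quad_eq {b : ℝ} (hb : 0 < b) (c x : ℝ) :
    Real.exp (-b * x ^ 2 + c * x)
      = Real.exp (-b * (x - c / (2 * b)) ^ 2) * Real.exp (c ^ 2 / (4 * b)) := by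
  rw [← Real.exp_add]; congr 1; field_simp; ring

lemma integrable_rexp_quad {b : ℝ} (hb : 0 < b) (c : ℝ) :
    Integrable (fun x : ℝ => Real.exp (-b * x ^ 2 + c * x)) := by
  have h := ((integrable_exp_neg_mul_sq hb).comp_sub_right (c / (2 * b))).mul_const
    (Real.exp (c ^ 2 / (4 * b)))
  exact h.congr (Filter.Eventually.of_forall fun x => (rexp_quad_eq hb c x).symm)

lemma integral_rexp_quad {b : ℝ} (hb : 0 < b) (c : ℝ) :
    ∫ x : ℝ, Real.exp (-b * x ^ 2 + c * x)
      = Real.sqrt (Real.pi / b) * Real.exp (c ^ 2 / (4 * b)) := by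
  simp_rw [rexp_quad_eq hb c]
  rw [integral_mul_const, integral_sub_right_eq_self (fun y => Real.exp (-b * y ^ 2)) (c / (2 * b)),
    integral_gaussian]

lemma heatK_nonneg (t x : ℝ) : 0 ≤ heatK t x := by
  unfold heatK; positivity

lemma exp_mul_heatK {t : ℝ} (ht : 0 < t) (a y : ℝ) :
    Real.exp (a * y) * heatK t y
      = (Real.sqrt (2 * Real.pi * t))⁻¹ * Real.exp (-(1 / (2 * t)) * y ^ 2 + a * y) := by
  unfold heatK
  rw [mul_comm (Real.exp (a * y)), mul_assoc, ← Real.exp_add]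
  congr 2
  field_simp

lemma integrable_exp_mul_heatK {t : ℝ} (ht : 0 < t) (a : ℝ) :
    Integrable (fun y : ℝ => Real.exp (a * y) * heatK t y) := by
  have hb : 0 < 1 / (2 * t) := by positivity
  have := (integrable_rexp_quad hb a).const_mul (Real.sqrt (2 * Real.pi * t))⁻¹
  exact this.congr (Filter.Eventually.of_forall fun y => (exp_mul_heatK ht a y).symm)

lemma integral_exp_mul_heatK {t : ℝ} (ht : 0 < t) (a : ℝ) :
    ∫ y : ℝ, Real.exp (a * y) * heatK t y = Real.exp (a ^ 2 * t / 2) := by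
  have hb : 0 < 1 / (2 * t) := by positivity
  simp_rw [exp_mul_heatK ht a]
  rw [integral_const_mul, integral_rexp_quad hb a]
  have h1 : Real.pi / (1 / (2 * t)) = 2 * Real.pi * t := by field_simp
  have h2 : a ^ 2 / (4 * (1 / (2 * t))) = a ^ 2 * t / 2 := by field_simp; ring
  rw [h1, h2, ← mul_assoc, inv_mul_cancel₀ (by positivity), one_mul]

lemma integral_Ioi_comp_exp (g : ℝ → ℝ) :
    ∫ w in Set.Ioi (0 : ℝ), g w = ∫ y : ℝ, Real.exp y * g (Real.exp y) := by
  have himg : Real.exp '' univ = Set.Ioi (0 : ℝ) := by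
    rw [image_univ, Real.range_exp]
  rw [← himg, integral_image_eq_integral_abs_deriv_smul MeasurableSet.univ
    (fun x _ => (Real.hasDerivAt_exp x).hasDerivWithinAt) Real.exp_injective.injOn g]
  simp [abs_of_pos (Real.exp_pos _), smul_eq_mul]

lemma exp_mul_pGBM {t x : ℝ} (hx : 0 < x) (y : ℝ) :
    Real.exp y * pGBM t (Real.exp y) x
      = Real.exp (-t / 8) * (Real.exp (-(y - Real.log x) / 2) * heatK t (y - Real.log x)) := by
  unfold pGBM
  rw [Real.log_exp, Real.rpow_def_of_pos (Real.exp_pos y), Real.log_exp,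
    show Real.sqrt x = Real.exp (Real.log x * (1 / 2)) by
      rw [Real.sqrt_eq_rpow, Real.rpow_def_of_pos hx]]
  rw [show Real.exp y * (Real.exp (Real.log x * (1 / 2)) * Real.exp (-t / 8)
        * heatK t (y - Real.log x) * Real.exp (y * (-(3) / 2)))
      = Real.exp (-t / 8) * ((Real.exp y * Real.exp (Real.log x * (1 / 2))
        * Real.exp (y * (-(3) / 2))) * heatK t (y - Real.log x)) by ring]
  rw [← Real.exp_add, ← Real.exp_add]
  congr 2
  ring

lemma inner_le {t : ℝ} (ht : 0 < t) {C₁ C₂ M : ℝ} (hC₁ : 0 < C₁) (hC₂ : 0 < C₂) (hM : 0 ≤ M)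
    {f : ℝ → ℝ} (hbd : ∀ x : ℝ, 0 < x → |f x| ≤ C₁ * Real.exp (C₂ * |Real.log x|))
    {x : ℝ} (hx : 0 < x) (hxM : |Real.log x| ≤ M) :
    |∫ w in Set.Ioi (0 : ℝ), f w * pGBM t w x|
      ≤ 2 * C₁ * Real.exp (C₂ * M) * Real.exp (C₂ * (C₂ + 1) * t / 2) := by
  set u := Real.log x with hu
  set D := C₁ * Real.exp (C₂ * M) * Real.exp (-t / 8) with hD
  set g₀ : ℝ → ℝ := fun y => D * (Real.exp ((C₂ - 1/2) * (y - u)) * heatK t (y - u)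
      + Real.exp ((-C₂ - 1/2) * (y - u)) * heatK t (y - u)) with hg₀
  have hD0 : 0 < D := by positivity
  have hint : Integrable g₀ := by
    exact (((integrable_exp_mul_heatK ht (C₂ - 1/2)).add
      (integrable_exp_mul_heatK ht (-C₂ - 1/2))).comp_sub_right u).const_mul D
  have hpoint : ∀ y : ℝ, Real.exp y * |f (Real.exp y) * pGBM t (Real.exp y) x| ≤ g₀ y := by
    intro y
    have hpg : 0 ≤ pGBM t (Real.exp y) x := by
      unfold pGBM
      have h0 : (0:ℝ) < Real.exp y := Real.exp_pos y
      have hH0 := heatK_nonneg t (Real.log (Real.exp y) - Real.log x)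
      positivity
    have h1 : Real.exp y * |f (Real.exp y) * pGBM t (Real.exp y) x|
        = |f (Real.exp y)| * (Real.exp y * pGBM t (Real.exp y) x) := by
      rw [abs_mul, abs_of_nonneg hpg]; ring
    rw [h1, exp_mul_pGBM hx y, ← hu]
    set z := y - u with hz
    have hH : 0 ≤ heatK t z := heatK_nonneg t z
    have hf1 : |f (Real.exp y)| ≤ C₁ * Real.exp (C₂ * |y|) := by
      simpa [Real.log_exp] using hbd (Real.exp y) (Real.exp_pos y)
    have hf2 : C₁ * Real.exp (C₂ * |y|) ≤ C₁ * Real.exp (C₂ * M) * Real.exp (C₂ * |z|) := by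
      rw [mul_assoc, ← Real.exp_add]
      have hy : |y| ≤ M + |z| := by
        have hyz : y = z + u := by rw [hz]; ring
        calc |y| = |z + u| := by rw [← hyz]
          _ ≤ |z| + |u| := abs_add_le _ _
          _ ≤ M + |z| := by linarith
      have : C₂ * |y| ≤ C₂ * M + C₂ * |z| := by nlinarith
      exact mul_le_mul_of_nonneg_left (Real.exp_le_exp.2 this) hC₁.le
    have hkey : Real.exp (C₂ * |z|) * Real.exp (-z / 2)
        ≤ Real.exp ((C₂ - 1/2) * z) + Real.exp ((-C₂ - 1/2) * z) := by
      rw [← Real.exp_add]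
      rcases le_or_gt 0 z with h | h
      · rw [abs_of_nonneg h, show C₂ * z + -z / 2 = (C₂ - 1/2) * z by ring]
        exact le_add_of_nonneg_right (Real.exp_pos _).le
      · rw [abs_of_neg h, show C₂ * -z + -z / 2 = (-C₂ - 1/2) * z by ring]
        exact le_add_of_nonneg_left (Real.exp_pos _).le
    calc |f (Real.exp y)| * (Real.exp (-t / 8) * (Real.exp (-z / 2) * heatK t z))
        ≤ (C₁ * Real.exp (C₂ * M) * Real.exp (C₂ * |z|))
            * (Real.exp (-t / 8) * (Real.exp (-z / 2) * heatK t z)) := by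
          exact mul_le_mul_of_nonneg_right (hf1.trans hf2) (by positivity)
      _ = D * ((Real.exp (C₂ * |z|) * Real.exp (-z / 2)) * heatK t z) := by rw [hD]; ring
      _ ≤ D * ((Real.exp ((C₂ - 1/2) * z) + Real.exp ((-C₂ - 1/2) * z)) * heatK t z) :=
          mul_le_mul_of_nonneg_left (mul_le_mul_of_nonneg_right hkey hH) hD0.le
      _ = g₀ y := by rw [hg₀]; ring
  calc |∫ w in Set.Ioi (0 : ℝ), f w * pGBM t w x|
      ≤ ∫ w in Set.Ioi (0 : ℝ), |f w * pGBM t w x| := by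
        have h := norm_integral_le_integral_norm (μ := volume.restrict (Set.Ioi (0:ℝ)))
          (fun w => f w * pGBM t w x)
        simp only [Real.norm_eq_abs] at h
        exact h
    _ = ∫ y : ℝ, Real.exp y * |f (Real.exp y) * pGBM t (Real.exp y) x| :=
        integral_Ioi_comp_exp _
    _ ≤ ∫ y : ℝ, g₀ y :=
        integral_mono_of_nonneg (Filter.Eventually.of_forall fun y => by positivity) hint
          (Filter.Eventually.of_forall hpoint)
    _ = D * (Real.exp ((C₂ - 1/2) ^ 2 * t / 2) + Real.exp ((-C₂ - 1/2) ^ 2 * t / 2)) := by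
        simp only [hg₀]
        rw [integral_const_mul,
          integral_add ((integrable_exp_mul_heatK ht (C₂ - 1/2)).comp_sub_right u)
            ((integrable_exp_mul_heatK ht (-C₂ - 1/2)).comp_sub_right u),
          integral_sub_right_eq_self (fun y => Real.exp ((C₂ - 1/2) * y) * heatK t y) u,
          integral_sub_right_eq_self (fun y => Real.exp ((-C₂ - 1/2) * y) * heatK t y) u,
          integral_exp_mul_heatK ht, integral_exp_mul_heatK ht]
    _ ≤ 2 * C₁ * Real.exp (C₂ * M) * Real.exp (C₂ * (C₂ + 1) * t / 2) := by
        have e1 : Real.exp (-t / 8) * Real.exp ((C₂ - 1/2) ^ 2 * t / 2)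
            ≤ Real.exp (C₂ * (C₂ + 1) * t / 2) := by
          rw [← Real.exp_add]
          apply Real.exp_le_exp.2
          nlinarith [mul_nonneg hC₂.le ht.le]
        have e2 : Real.exp (-t / 8) * Real.exp ((-C₂ - 1/2) ^ 2 * t / 2)
            ≤ Real.exp (C₂ * (C₂ + 1) * t / 2) := by
          rw [← Real.exp_add]
          apply Real.exp_le_exp.2
          nlinarith [mul_nonneg hC₂.le ht.le]
        calc D * (Real.exp ((C₂ - 1/2) ^ 2 * t / 2) + Real.exp ((-C₂ - 1/2) ^ 2 * t / 2))
            = C₁ * Real.exp (C₂ * M) * (Real.exp (-t / 8) * Real.exp ((C₂ - 1/2) ^ 2 * t / 2)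
              + Real.exp (-t / 8) * Real.exp ((-C₂ - 1/2) ^ 2 * t / 2)) := by rw [hD]; ring
          _ ≤ C₁ * Real.exp (C₂ * M)
              * (Real.exp (C₂ * (C₂ + 1) * t / 2) + Real.exp (C₂ * (C₂ + 1) * t / 2)) := by
              exact mul_le_mul_of_nonneg_left (add_le_add e1 e2) (by positivity)
          _ = 2 * C₁ * Real.exp (C₂ * M) * Real.exp (C₂ * (C₂ + 1) * t / 2) := by ring

/-- For a compact `K ⊂ (0,∞)` and a continuous `f` with
`|f(x)| ≤ C₁ e^{C₂|log x|}`, the kernel operator `P_t f(x) = ∫₀^∞ f(w) p_GBM(t,w;x) dw`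
satisfies `∫_K |P_t f| ≤ 2 C₁ e^{(C₂+2)M} e^{C₂(C₂+1)t/2}` with
`M = max{|log min K|, |log max K|}`. -/
theorem kernel_L1_bound_on_compacts
    (K : Set ℝ) (hK : IsCompact K) (hKne : K.Nonempty) (hKpos : K ⊆ Set.Ioi (0 : ℝ))
    (C₁ C₂ : ℝ) (hC₁ : 0 < C₁) (hC₂ : 0 < C₂)
    (f : ℝ → ℝ) (hf : ContinuousOn f (Set.Ioi (0 : ℝ)))
    (hbd : ∀ x : ℝ, 0 < x → |f x| ≤ C₁ * Real.exp (C₂ * |Real.log x|)) :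
    ∀ t : ℝ, 0 < t →
      ∫ x in K, |∫ w in Set.Ioi (0 : ℝ), f w * pGBM t w x|
        ≤ 2 * C₁ * Real.exp ((C₂ + 2) * max |Real.log (sInf K)| |Real.log (sSup K)|)
            * Real.exp (C₂ * (C₂ + 1) * t / 2) := by
  intro t ht
  have hm₁K : sInf K ∈ K := hK.sInf_mem hKne
  have hm₂K : sSup K ∈ K := hK.sSup_mem hKne
  have h₁ : 0 < sInf K := hKpos hm₁K
  have h₂ : 0 < sSup K := hKpos hm₂K
  set M := max |Real.log (sInf K)| |Real.log (sSup K)| with hM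
  have hM0 : 0 ≤ M := le_trans (abs_nonneg _) (le_max_left _ _)
  set B := 2 * C₁ * Real.exp (C₂ * M) * Real.exp (C₂ * (C₂ + 1) * t / 2) with hB
  have hB0 : 0 ≤ B := by positivity
  have hxbd : ∀ x ∈ K, |∫ w in Set.Ioi (0 : ℝ), f w * pGBM t w x| ≤ B := by
    intro x hxK
    have hx : 0 < x := hKpos hxK
    have hle : x ≤ sSup K := le_csSup hK.bddAbove hxK
    have hge : sInf K ≤ x := csInf_le hK.bddBelow hxK
    have hlog : |Real.log x| ≤ M := by
      rw [abs_le]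
      constructor
      · calc -M ≤ -|Real.log (sInf K)| := neg_le_neg (le_max_left _ _)
          _ ≤ Real.log (sInf K) := neg_abs_le _
          _ ≤ Real.log x := Real.log_le_log h₁ hge
      · calc Real.log x ≤ Real.log (sSup K) := Real.log_le_log hx hle
          _ ≤ |Real.log (sSup K)| := le_abs_self _
          _ ≤ M := le_max_right _ _
    exact inner_le ht hC₁ hC₂ hM0 hbd hx hlog
  have hvol : (volume K).toReal ≤ Real.exp (2 * M) := by
    have hsub : K ⊆ Set.Icc (sInf K) (sSup K) := fun x hx =>
      ⟨csInf_le hK.bddBelow hx, le_csSup hK.bddAbove hx⟩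
    have h1 : volume K ≤ volume (Set.Icc (sInf K) (sSup K)) := measure_mono hsub
    rw [Real.volume_Icc] at h1
    have h2 : (volume K).toReal ≤ sSup K - sInf K :=
      ENNReal.toReal_le_of_le_ofReal (by
        have := csInf_le hK.bddBelow hm₂K
        linarith [le_csSup hK.bddAbove hm₁K, csInf_le hK.bddBelow hm₂K]) h1
    have h3 : sSup K ≤ Real.exp M := by
      calc sSup K = Real.exp (Real.log (sSup K)) := (Real.exp_log h₂).symm
        _ ≤ Real.exp M := Real.exp_le_exp.2 ((le_abs_self _).trans (le_max_right _ _))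
    calc (volume K).toReal ≤ sSup K - sInf K := h2
      _ ≤ Real.exp M := by linarith
      _ ≤ Real.exp (2 * M) := Real.exp_le_exp.2 (by linarith)
  have hfin : ∫ x in K, |∫ w in Set.Ioi (0 : ℝ), f w * pGBM t w x| ≤ (volume K).toReal * B := by
    have := integral_mono_of_nonneg (μ := volume.restrict K)
      (f := fun x => |∫ w in Set.Ioi (0 : ℝ), f w * pGBM t w x|) (g := fun _ => B)
      (Filter.Eventually.of_forall fun x => abs_nonneg _)
      (integrableOn_const hK.measure_lt_top.ne)
      ((ae_restrict_iff' hK.measurableSet).2 (Filter.Eventually.of_forall hxbd))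
    simpa [setIntegral_const, smul_eq_mul, measureReal_def] using this
  have hexp : Real.exp (2 * M) * Real.exp (C₂ * M) = Real.exp ((C₂ + 2) * M) := by
    rw [← Real.exp_add]; congr 1; ring
  calc ∫ x in K, |∫ w in Set.Ioi (0 : ℝ), f w * pGBM t w x|
      ≤ (volume K).toReal * B := hfin
    _ ≤ Real.exp (2 * M) * B := mul_le_mul_of_nonneg_right hvol hB0
    _ = 2 * C₁ * (Real.exp (2 * M) * Real.exp (C₂ * M)) * Real.exp (C₂ * (C₂ + 1) * t / 2) := by
        rw [hB]; ring
    _ = 2 * C₁ * Real.exp ((C₂ + 2) * M) * Real.exp (C₂ * (C₂ + 1) * t / 2) := by rw [hexp]
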